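/- Let W : ℝ → ℝ be a C¹, 1-periodic, even function with Lipschitz derivative, ‖W'‖_∞ = 1 and zero average, let γ > 0, T > 0, and (a_n) an N-periodic sequence of positive reals. Let τ_k → 0, ε_k = γτ_k, and for each k let (u_n^k) solve the perturbed scheme u_n^k ∈ argmin_{u∈ℝ} {ε_k W(u/ε_k) + Tu + a_n(u − u_{n−1}^k)²/(2τ_k)} (with unique minimizers) and initial data u_0^k → u_0. If for every t ≥ 0 the interpolations u^k(t) = u^k_{⌈t/τ_k⌉} converge to a limit u(t), then u(t) = u_0 − γ f_γ(T,(a_n)) t for all t ≥ 0. -/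

import Mathlib

open Filter

/-- `(y n)` is a solution of the rescaled scheme: at each step `n ≥ 1`, `y n` is
the unique minimizer over `ℝ` of `t ↦ W t + T t + a_n (γ/2)(t - y_{n-1})²`. -/
def IsRescaledSol (W : ℝ → ℝ) (T γ : ℝ) (a : ℕ → ℝ) (y : ℕ → ℝ) : Prop :=
  ∀ n : ℕ, 1 ≤ n →
    (∀ t : ℝ, W (y n) + T * y n + a n * (γ / 2) * (y n - y (n - 1)) ^ 2 ≤
      W t + T * t + a n * (γ / 2) * (t - y (n - 1)) ^ 2) ∧
    (∀ t : ℝ, (∀ s : ℝ, W t + T * t + a n * (γ / 2) * (t - y (n - 1)) ^ 2 ≤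
      W s + T * s + a n * (γ / 2) * (s - y (n - 1)) ^ 2) → t = y n)

/-- Integer periodicity of `W`. -/
lemma Wint {W : ℝ → ℝ} (hWper : Function.Periodic W 1) (x : ℝ) (m : ℤ) :
    W (x + m) = W x := by
  simpa using (hWper.int_mul m) x

/-- Comparison principle with integer offset for rescaled solutions. -/
lemma comp_lemma {W : ℝ → ℝ} (hWper : Function.Periodic W 1) {T γ : ℝ} (hγ : 0 < γ)
    {a : ℕ → ℝ} (ha : ∀ n, 0 < a n) {y z : ℕ → ℝ}
    (hy : IsRescaledSol W T γ a y) (hz : IsRescaledSol W T γ a z)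
    (m : ℤ) (h0 : y 0 ≤ z 0 + m) : ∀ n, y n ≤ z n + m := by
  intro n
  induction n with
  | zero => exact h0
  | succ n ih =>
    obtain ⟨hymin, hyuniq⟩ := hy (n + 1) (by omega)
    obtain ⟨hzmin, _⟩ := hz (n + 1) (by omega)
    simp only [Nat.add_sub_cancel] at hymin hyuniq hzmin
    set c := a (n + 1) * (γ / 2) with hc
    have hcpos : 0 < c := mul_pos (ha _) (by linarith)
    set t := y (n + 1) with hts
    set t' := z (n + 1) + (m : ℝ) with ht's
    set p := y n with hps
    set p' := z n + (m : ℝ) with hp's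
    -- translated minimality for t'
    have hmin'' : ∀ s : ℝ, W t' + T * t' + c * (t' - p') ^ 2 ≤
        W s + T * s + c * (s - p') ^ 2 := by
      intro s
      have h1 := hzmin (s - m)
      have e1 : W t' = W (z (n + 1)) := Wint hWper _ m
      have e2 : W s = W (s - m) := by
        have h := Wint hWper (s - (m : ℝ)) m
        rw [sub_add_cancel] at h
        exact h
      have e3 : (t' - p') = z (n + 1) - z n := by rw [ht's, hp's]; ring
      have e4 : (s - p') ^ 2 = (s - m - z n) ^ 2 := by rw [hp's]; ring_nf
      rw [e1, e2, e3, e4]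
      have : T * t' = T * (z (n + 1)) + T * m := by rw [ht's]; ring
      have h2 : T * (s - m) = T * s - T * m := by ring
      linarith [h1]
    by_contra hcon
    push_neg at hcon
    have htt' : t' < t := hcon
    have h1 := hymin t'
    have h2 := hmin'' t
    have hpp' : p ≤ p' := ih
    have hsum : c * (t - p) ^ 2 + c * (t' - p') ^ 2 ≤
        c * (t' - p) ^ 2 + c * (t - p') ^ 2 := by linarith
    have hkey : (p' - p) * (t - t') ≤ 0 := by nlinarith
    have hpe : p = p' := by nlinarith
    have := hyuniq t' (by rw [hpe]; exact hmin'')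
    linarith

/-- Rescaling: `u n / (γ τ)` solves the rescaled scheme. -/
lemma rescale_sol {W : ℝ → ℝ} {T γ : ℝ} (hγ : 0 < γ) {a : ℕ → ℝ} {τ : ℝ} (hτ : 0 < τ)
    (U : ℕ → ℝ)
    (hmin : ∀ n : ℕ, 1 ≤ n → ∀ v : ℝ,
      γ * τ * W (U n / (γ * τ)) + T * U n + a n * (U n - U (n - 1)) ^ 2 / (2 * τ) ≤
        γ * τ * W (v / (γ * τ)) + T * v + a n * (v - U (n - 1)) ^ 2 / (2 * τ))
    (huniq : ∀ n : ℕ, 1 ≤ n → ∀ v : ℝ,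
      (∀ w : ℝ, γ * τ * W (v / (γ * τ)) + T * v + a n * (v - U (n - 1)) ^ 2 / (2 * τ) ≤
        γ * τ * W (w / (γ * τ)) + T * w + a n * (w - U (n - 1)) ^ 2 / (2 * τ)) → v = U n) :
    IsRescaledSol W T γ a (fun n => U n / (γ * τ)) := by
  have hε : 0 < γ * τ := mul_pos hγ hτ
  have hεne : γ * τ ≠ 0 := ne_of_gt hε
  have hγne : γ ≠ 0 := ne_of_gt hγ
  have hτne : τ ≠ 0 := ne_of_gt hτ
  intro n hn
  have key : ∀ x p : ℝ,
      (γ * τ) * (W (x / (γ * τ)) + T * (x / (γ * τ)) +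
        a n * (γ / 2) * (x / (γ * τ) - p / (γ * τ)) ^ 2) =
      (γ * τ) * W (x / (γ * τ)) + T * x + a n * (x - p) ^ 2 / (2 * τ) := by
    intro x p
    field_simp
  have e : ∀ t : ℝ, γ * τ * t / (γ * τ) = t := fun t => by field_simp
  constructor
  · intro t
    have h := hmin n hn (γ * τ * t)
    rw [e t] at h
    have k1 := key (U n) (U (n - 1))
    have k2 := key (γ * τ * t) (U (n - 1))
    rw [e t] at k2
    simp only []
    refine le_of_mul_le_mul_left ?_ hε
    rw [k1, k2]
    linarith
  · intro t ht
    have h := huniq n hn (γ * τ * t) ?_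
    · show t = U n / (γ * τ)
      rw [eq_div_iff hεne]
      linarith [h]
    · intro w
      have h2 := ht (w / (γ * τ))
      simp only [] at h2
      have h3 := mul_le_mul_of_nonneg_left h2 hε.le
      have k2 := key (γ * τ * t) (U (n - 1))
      rw [e t] at k2
      have k3 := key w (U (n - 1))
      rw [e t]
      linarith

/-- In the critical regime `ε_k = γ τ_k`, any pointwise limit of the interpolated
perturbed discrete solutions for the wiggly energy is the linear motion
`u(t) = u₀ - γ f_γ(T,(a_n)) t`, where `f_γ(T,(a_n))` is the homogenized velocity
of the rescaled scheme. -/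
theorem stmt_14 (W : ℝ → ℝ)
    (hWC1 : ContDiff ℝ 1 W)
    (hWper : Function.Periodic W 1)
    (hWeven : ∀ s : ℝ, W (-s) = W s)
    (hWlip : ∃ L : NNReal, LipschitzWith L (deriv W))
    (hWnorm : sSup (Set.range fun s : ℝ => |deriv W s|) = 1)
    (hWavg : ∫ s in (0:ℝ)..1, W s = 0)
    (γ T : ℝ) (hγ : 0 < γ) (hT : 0 < T) (N : ℕ) (hN : 1 ≤ N)
    (a : ℕ → ℝ) (ha : ∀ n, 0 < a n) (haper : ∀ n : ℕ, a (n + N) = a n)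
    (fγ : ℝ)
    (hfγ : ∀ y : ℕ → ℝ, IsRescaledSol W T γ a y →
      Tendsto (fun n : ℕ => (y 0 - y n) / (n : ℝ)) atTop (nhds fγ))
    (τ : ℕ → ℝ) (hτpos : ∀ k, 0 < τ k) (hτ0 : Tendsto τ atTop (nhds 0))
    (u : ℕ → ℕ → ℝ) (u₀ : ℝ)
    (hu0 : Tendsto (fun k => u k 0) atTop (nhds u₀))
    (hmin : ∀ k : ℕ, ∀ n : ℕ, 1 ≤ n → ∀ v : ℝ,
      γ * τ k * W (u k n / (γ * τ k)) + T * u k n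
          + a n * (u k n - u k (n - 1)) ^ 2 / (2 * τ k) ≤
        γ * τ k * W (v / (γ * τ k)) + T * v
          + a n * (v - u k (n - 1)) ^ 2 / (2 * τ k))
    (huniq : ∀ k : ℕ, ∀ n : ℕ, 1 ≤ n → ∀ v : ℝ,
      (∀ w : ℝ, γ * τ k * W (v / (γ * τ k)) + T * v
          + a n * (v - u k (n - 1)) ^ 2 / (2 * τ k) ≤
        γ * τ k * W (w / (γ * τ k)) + T * w
          + a n * (w - u k (n - 1)) ^ 2 / (2 * τ k)) → v = u k n)
    (v : ℝ → ℝ)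
    (hconv : ∀ t : ℝ, 0 ≤ t →
      Tendsto (fun k => u k ⌈t / τ k⌉₊) atTop (nhds (v t))) :
    ∀ t : ℝ, 0 ≤ t → v t = u₀ - γ * fγ * t := by
  have hsol : ∀ k : ℕ, IsRescaledSol W T γ a (fun n => u k n / (γ * τ k)) := fun k =>
    rescale_sol hγ (hτpos k) (u k) (fun n hn w => hmin k n hn w)
      (fun n hn w hw => huniq k n hn w hw)
  set z : ℕ → ℝ := fun n => u 0 n / (γ * τ 0) with hz
  have hzsol : IsRescaledSol W T γ a z := hsol 0
  have hzf : Tendsto (fun n : ℕ => (z 0 - z n) / (n : ℝ)) atTop (nhds fγ) := hfγ z hzsol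
  have hbound : ∀ k n : ℕ,
      |(u k 0 / (γ * τ k) - u k n / (γ * τ k)) - (z 0 - z n)| ≤ 1 := by
    intro k n
    set y : ℕ → ℝ := fun n => u k n / (γ * τ k) with hy
    have hysol : IsRescaledSol W T γ a y := hsol k
    set m : ℤ := ⌈y 0 - z 0⌉ with hm
    have h1 : y 0 ≤ z 0 + (m : ℝ) := by
      have := Int.le_ceil (y 0 - z 0); linarith
    have h2 : z 0 ≤ y 0 + ((1 - m : ℤ) : ℝ) := by
      have := Int.ceil_lt_add_one (y 0 - z 0)
      push_cast
      linarith
    have hAn := comp_lemma hWper hγ ha hysol hzsol m h1 n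
    have hBn := comp_lemma hWper hγ ha hzsol hysol (1 - m) h2 n
    simp only [hy, hz] at hAn hBn h1 h2 ⊢
    push_cast at hAn hBn h1 h2
    rw [abs_le]
    constructor <;> linarith
  intro t ht
  rcases ht.eq_or_lt with h0 | hpos
  · have hc := hconv 0 le_rfl
    simp only [zero_div, Nat.ceil_zero] at hc
    have hv0 : v 0 = u₀ := tendsto_nhds_unique hc hu0
    rw [← h0, hv0]; ring
  · set nn : ℕ → ℕ := fun k => ⌈t / τ k⌉₊ with hnn
    have hnk1 : ∀ k, 1 ≤ nn k := fun k => Nat.ceil_pos.mpr (div_pos hpos (hτpos k))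
    have hnpos : ∀ k, (0 : ℝ) < (nn k : ℝ) := fun k => by exact_mod_cast hnk1 k
    have hinv : Tendsto (fun k => (τ k)⁻¹) atTop atTop := by
      apply tendsto_inv_nhdsGT_zero.comp
      refine tendsto_nhdsWithin_iff.mpr ⟨hτ0, ?_⟩
      exact Eventually.of_forall fun k => Set.mem_Ioi.mpr (hτpos k)
    have hdiv : Tendsto (fun k => t / τ k) atTop atTop := by
      simp only [div_eq_mul_inv]
      exact Tendsto.const_mul_atTop hpos hinv
    have hnkTop : Tendsto nn atTop atTop := by
      apply tendsto_atTop.mpr; intro b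
      filter_upwards [hdiv.eventually_ge_atTop (b : ℝ)] with k hk
      calc b = ⌈(b : ℝ)⌉₊ := (Nat.ceil_natCast b).symm
        _ ≤ nn k := Nat.ceil_mono hk
    have hlo : ∀ k, t ≤ τ k * (nn k : ℝ) := by
      intro k
      have h := Nat.le_ceil (t / τ k)
      rw [div_le_iff₀ (hτpos k)] at h
      calc t ≤ (nn k : ℝ) * τ k := h
        _ = τ k * (nn k : ℝ) := by ring
    have hhi : ∀ k, τ k * (nn k : ℝ) ≤ t + τ k := by
      intro k
      have h := (Nat.ceil_lt_add_one (le_of_lt (div_pos hpos (hτpos k)))).le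
      have h2 := mul_le_mul_of_nonneg_left h (hτpos k).le
      calc τ k * (nn k : ℝ) ≤ τ k * (t / τ k + 1) := h2
        _ = t + τ k := by
            have hne : τ k ≠ 0 := (hτpos k).ne'
            field_simp
    have hτn : Tendsto (fun k => τ k * (nn k : ℝ)) atTop (nhds t) := by
      have h1 : Tendsto (fun k => t + τ k) atTop (nhds (t + 0)) := tendsto_const_nhds.add hτ0
      rw [add_zero] at h1
      exact tendsto_of_tendsto_of_tendsto_of_le_of_le tendsto_const_nhds h1 hlo hhi
    have hB : Tendsto
        (fun k => (u k 0 / (γ * τ k) - u k (nn k) / (γ * τ k)) / (nn k : ℝ))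
        atTop (nhds fγ) := by
      have h1 : Tendsto (fun k => (z 0 - z (nn k)) / (nn k : ℝ)) atTop (nhds fγ) :=
        hzf.comp hnkTop
      have h2 : Tendsto (fun k => (1 : ℝ) / (nn k : ℝ)) atTop (nhds 0) :=
        tendsto_one_div_atTop_nhds_zero_nat.comp hnkTop
      have h3 : Tendsto
          (fun k => ((u k 0 / (γ * τ k) - u k (nn k) / (γ * τ k)) - (z 0 - z (nn k)))
            / (nn k : ℝ)) atTop (nhds 0) := by
        apply squeeze_zero_norm _ h2
        intro k
        rw [Real.norm_eq_abs, abs_div, abs_of_pos (hnpos k)]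
        gcongr
        exact hbound k (nn k)
      have h4 := h1.add h3
      rw [add_zero] at h4
      refine h4.congr fun k => ?_
      ring
    have hfinal : Tendsto (fun k => u k (nn k)) atTop (nhds (u₀ - γ * (t * fγ))) := by
      have hmul : Tendsto (fun k => γ * (τ k * (nn k : ℝ)) *
          ((u k 0 / (γ * τ k) - u k (nn k) / (γ * τ k)) / (nn k : ℝ)))
          atTop (nhds (γ * (t * fγ))) := by
        have := (hτn.const_mul γ).mul hB
        simpa [mul_assoc] using this
      have hmain := hu0.sub hmul
      refine hmain.congr fun k => ?_
      have hεne : γ * τ k ≠ 0 := ne_of_gt (mul_pos hγ (hτpos k))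
      have hnne : (nn k : ℝ) ≠ 0 := ne_of_gt (hnpos k)
      have hτne : τ k ≠ 0 := (hτpos k).ne'
      field_simp
      ring
    have hcv : Tendsto (fun k => u k (nn k)) atTop (nhds (v t)) := hconv t ht
    have := tendsto_nhds_unique hcv hfinal
    rw [this]; ring
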